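/- Every infinite, torsion-free, virtually cyclic group is isomorphic to ℤ. -/

import Mathlib

/-- Torsion-free monoid, as in the older Mathlib (since removed). -/
def Monoid.IsTorsionFree (G : Type*) [Monoid G] : Prop :=
  ∀ g : G, g ≠ 1 → ¬IsOfFinOrder g


open Subgroup Function

section Aux

variable {G : Type*} [Group G]

/-- In a torsion-free group, nontrivial power equal to one forces the element to be one. -/
lemma aux_tf_pow_eq_one (htf : Monoid.IsTorsionFree G) {g : G} {n : ℕ} (hn : n ≠ 0)
    (h : g ^ n = 1) : g = 1 := by
  by_contra hg
  exact htf g hg (isOfFinOrder_iff_pow_eq_one.mpr ⟨n, Nat.pos_of_ne_zero hn, h⟩)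

lemma aux_tf_zpow_eq_one (htf : Monoid.IsTorsionFree G) {g : G} {n : ℤ} (hn : n ≠ 0)
    (h : g ^ n = 1) : g = 1 := by
  by_contra hg
  exact htf g hg (isOfFinOrder_iff_zpow_eq_one.mpr ⟨n, hn, h⟩)

lemma aux_zpow_injective (htf : Monoid.IsTorsionFree G) {g : G} (hg : g ≠ 1) :
    Function.Injective fun n : ℤ => g ^ n := by
  intro a b hab
  simp only at hab
  by_contra hne
  apply hg
  exact aux_tf_zpow_eq_one htf (sub_ne_zero.mpr hne) (by rw [zpow_sub, hab, mul_inv_cancel])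

lemma aux_isCyclic_zpowers (x : G) : IsCyclic ↥(zpowers x) := by
  refine ⟨⟨⟨x, mem_zpowers x⟩, ?_⟩⟩
  rintro ⟨y, hy⟩
  obtain ⟨k, hk⟩ := mem_zpowers_iff.mp hy
  exact mem_zpowers_iff.mpr ⟨k, Subtype.ext (by push_cast; exact hk)⟩

lemma aux_isCyclic_of_injective {H : Type*} [Group H] [IsCyclic H] (f : G →* H)
    (hf : Function.Injective f) : IsCyclic G := by
  have e : G ≃* f.range := MonoidHom.ofInjective hf
  exact isCyclic_of_surjective e.symm e.symm.surjective

lemma aux_infinite_of_finiteIndex [Infinite G] (H : Subgroup G) [H.FiniteIndex] : Infinite H := by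
  by_contra h
  rw [not_infinite_iff_finite] at h
  haveI : Finite (G ⧸ H) := inferInstance
  haveI : Finite G := Finite.of_equiv _ (Subgroup.groupEquivQuotientProdSubgroup (s := H)).symm
  exact not_finite G

/-- An infinite cyclic group is isomorphic to `Multiplicative ℤ`. -/
lemma aux_infinite_cyclic_iso (G : Type*) [Group G] [Infinite G] [IsCyclic G] :
    Nonempty (G ≃* Multiplicative ℤ) := by
  obtain ⟨g, hg⟩ := IsCyclic.exists_generator (α := G)
  have hfin : ¬ IsOfFinOrder g := by
    intro h
    have h1 : (zpowers g : Set G).Finite := finite_zpowers.mpr h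
    have h2 : (zpowers g : Set G) = Set.univ := by
      ext y; simp [hg y]
    rw [h2] at h1
    haveI : Finite G := Set.finite_univ_iff.mp h1
    exact not_finite G
  have hinj : Function.Injective (zpowersHom G g) := by
    intro a b hab
    simp only [zpowersHom_apply] at hab
    have : g ^ (a.toAdd - b.toAdd) = 1 := by rw [zpow_sub, hab, mul_inv_cancel]
    have hab' : a.toAdd = b.toAdd := by
      by_contra hne
      exact hfin (isOfFinOrder_iff_zpow_eq_one.mpr ⟨_, sub_ne_zero.mpr hne, this⟩)
    exact Multiplicative.toAdd.injective hab'
  have hsurj : Function.Surjective (zpowersHom G g) := by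
    intro y
    obtain ⟨k, hk⟩ := mem_zpowers_iff.mp (hg y)
    exact ⟨Multiplicative.ofAdd k, hk⟩
  exact ⟨(MulEquiv.ofBijective (zpowersHom G g) ⟨hinj, hsurj⟩).symm⟩

/-- A cyclic infinite subgroup is generated by a single nontrivial element. -/
lemma aux_eq_zpowers (H : Subgroup G) [IsCyclic H] [Infinite H] :
    ∃ x : G, x ≠ 1 ∧ H = zpowers x := by
  obtain ⟨u, hu⟩ := IsCyclic.exists_generator (α := H)
  refine ⟨(u : G), ?_, ?_⟩
  · intro hu1
    have hu1' : u = 1 := Subtype.ext hu1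
    obtain ⟨a, b, hab⟩ := exists_pair_ne ↥H
    apply hab
    have ha : a = 1 := by
      obtain ⟨k, hk⟩ := mem_zpowers_iff.mp (hu a)
      rw [← hk, hu1', one_zpow]
    have hb : b = 1 := by
      obtain ⟨k, hk⟩ := mem_zpowers_iff.mp (hu b)
      rw [← hk, hu1', one_zpow]
    rw [ha, hb]
  · apply le_antisymm
    · intro h hh
      obtain ⟨k, hk⟩ := mem_zpowers_iff.mp (hu ⟨h, hh⟩)
      exact mem_zpowers_iff.mpr ⟨k, by simpa using congrArg Subtype.val hk⟩
    · rw [zpowers_le]; exact u.2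

end Aux

/-- Every infinite, torsion-free, virtually cyclic group is
isomorphic to `ℤ`. -/
theorem stmt_4 (G : Type) [Group G] [Infinite G]
    (hvc : ∃ H : Subgroup G, IsCyclic H ∧ H.FiniteIndex)
    (htf : Monoid.IsTorsionFree G) :
    Nonempty (G ≃* Multiplicative ℤ) := by
  classical
  obtain ⟨H, hHcyc, hHfi⟩ := hvc
  haveI := hHcyc; haveI := hHfi
  haveI : Infinite H := aux_infinite_of_finiteIndex H
  obtain ⟨x, hx1, hxH⟩ := aux_eq_zpowers H
  haveI : (zpowers x).FiniteIndex := hxH ▸ hHfi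
  -- pass to the normal core
  set N := (zpowers x).normalCore with hN
  haveI : N.FiniteIndex := Subgroup.finiteIndex_normalCore (H := zpowers x)
  haveI : N.Normal := Subgroup.normalCore_normal _
  haveI : Infinite N := aux_infinite_of_finiteIndex N
  haveI : IsCyclic ↥(zpowers x) := aux_isCyclic_zpowers x
  haveI : IsCyclic N := Subgroup.isCyclic_of_le (Subgroup.normalCore_le _)
  obtain ⟨x₀, hx₀1, hNx₀⟩ := aux_eq_zpowers N
  haveI hfiN : (zpowers x₀).FiniteIndex := hNx₀ ▸ (inferInstance : N.FiniteIndex)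
  haveI hnorN : (zpowers x₀).Normal := hNx₀ ▸ (inferInstance : N.Normal)
  have hzinj : Function.Injective fun n : ℤ => x₀ ^ n := aux_zpow_injective htf hx₀1
  -- every conjugate of x₀ is x₀ or x₀⁻¹
  have hconj : ∀ g : G, g * x₀ * g⁻¹ = x₀ ∨ g * x₀ * g⁻¹ = x₀⁻¹ := by
    intro g
    obtain ⟨k, hk⟩ := mem_zpowers_iff.mp (hnorN.conj_mem x₀ (mem_zpowers x₀) g)
    obtain ⟨j, hj⟩ := mem_zpowers_iff.mp (hnorN.conj_mem x₀ (mem_zpowers x₀) g⁻¹)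
    rw [inv_inv] at hj
    have hx : x₀ ^ (k * j) = x₀ ^ (1 : ℤ) := by
      rw [zpow_one, mul_comm, zpow_mul]
      calc (x₀ ^ j) ^ k = (g⁻¹ * x₀ * g) ^ k := by rw [hj]
        _ = g⁻¹ * x₀ ^ k * g := by
            rw [show g⁻¹ * x₀ * g = g⁻¹ * x₀ * g⁻¹⁻¹ by rw [inv_inv], conj_zpow, inv_inv]
        _ = g⁻¹ * (g * x₀ * g⁻¹) * g := by rw [hk]
        _ = x₀ := by group
    have hkj : k * j = 1 := hzinj hx
    rcases Int.isUnit_iff.mp (IsUnit.of_mul_eq_one j hkj) with h1 | h1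
    · left; rw [← hk, h1, zpow_one]
    · right; rw [← hk, h1, zpow_neg, zpow_one]
  -- x₀ is central
  have hcen : x₀ ∈ Subgroup.center G := by
    rw [Subgroup.mem_center_iff]
    intro g
    rcases hconj g with h | h
    · have := congrArg (fun y => y * g) h
      simpa [mul_assoc] using this
    · exfalso
      set m := (zpowers x₀).index with hm
      have hm0 : m ≠ 0 := hfiN.index_ne_zero
      obtain ⟨t, ht⟩ := mem_zpowers_iff.mp ((zpowers x₀).pow_index_mem g)
      have h1 : g * x₀ ^ t * g⁻¹ = x₀ ^ (-t) := by
        rw [show g * x₀ ^ t * g⁻¹ = (g * x₀ * g⁻¹) ^ t from (conj_zpow).symm, h,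
          inv_zpow, ← zpow_neg]
      have h2 : g * x₀ ^ t * g⁻¹ = x₀ ^ t := by
        rw [ht]; group
      have ht0 : t = -t := hzinj (h2.symm.trans h1)
      have ht0' : t = 0 := by omega
      have hg1 : g = 1 := aux_tf_pow_eq_one htf hm0 (by rw [← ht, ht0', zpow_zero])
      rw [hg1, one_mul, inv_one, mul_one] at h
      apply hx₀1
      exact aux_tf_zpow_eq_one htf (two_ne_zero) (by rw [show (2:ℤ) = 1 + 1 by norm_num, zpow_add, zpow_one]; nth_rewrite 2 [h]; exact mul_inv_cancel x₀)
  -- center has finite index, transfer is injective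
  have hle : zpowers x₀ ≤ Subgroup.center G := zpowers_le.mpr hcen
  haveI : (Subgroup.center G).FiniteIndex := Subgroup.finiteIndex_of_le hle
  set f := MonoidHom.transferCenterPow G with hf
  have hn0 : (Subgroup.center G).index ≠ 0 :=
    (inferInstance : (Subgroup.center G).FiniteIndex).index_ne_zero
  have hfinj : Function.Injective f := by
    rw [injective_iff_map_eq_one]
    intro g hg
    have : g ^ (Subgroup.center G).index = 1 := by
      have := congrArg (Subtype.val) hg
      rwa [MonoidHom.transferCenterPow_apply] at this
    exact aux_tf_pow_eq_one htf hn0 this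
  -- the center is cyclic
  have htfA : Monoid.IsTorsionFree ↥(Subgroup.center G) := fun a ha hfo => htf (a : G) (fun h => ha (Subtype.ext h)) ((Subgroup.subtype _).isOfFinOrder hfo)
  haveI hAcyc : IsCyclic ↥(Subgroup.center G) := by
    set x₁ : ↥(Subgroup.center G) := ⟨x₀, hcen⟩ with hx₁
    have hx₁eq : zpowers x₁ = (zpowers x₀).subgroupOf (Subgroup.center G) := by
      ext a
      simp only [Subgroup.mem_subgroupOf, mem_zpowers_iff]
      constructor
      · rintro ⟨k, rfl⟩; exact ⟨k, by push_cast; rfl⟩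
      · rintro ⟨k, hk⟩; exact ⟨k, Subtype.ext (by push_cast; exact hk)⟩
    haveI hfi₁ : (zpowers x₁).FiniteIndex := by
      rw [hx₁eq]; infer_instance
    haveI : (zpowers x₁).Normal := by
      constructor
      intro n hn g
      have hcomm : g * n * g⁻¹ = n := by
        have := Subgroup.mem_center_iff.mp g.2 (n : G)
        have hgn : g * n = n * g := Subtype.ext (by push_cast; rw [← this])
        rw [hgn]; group
      rwa [hcomm]
    set m' := (zpowers x₁).index with hm'
    have hm'0 : m' ≠ 0 := hfi₁.index_ne_zero
    have hcommA : ∀ a b : ↥(Subgroup.center G), a * b = b * a := by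
      intro a b
      exact Subtype.ext (Subgroup.mem_center_iff.mp a.2 (b : G)).symm
    set ψ : ↥(Subgroup.center G) →* ↥(zpowers x₁) :=
      { toFun := fun a => ⟨a ^ m', (zpowers x₁).pow_index_mem a⟩
        map_one' := Subtype.ext (one_pow m')
        map_mul' := fun a b => Subtype.ext (Commute.mul_pow (hcommA a b) m') } with hψ
    have hψinj : Function.Injective ψ := by
      rw [injective_iff_map_eq_one]
      intro a ha
      have : a ^ m' = 1 := congrArg Subtype.val ha
      exact aux_tf_pow_eq_one htfA hm'0 this
    haveI : IsCyclic ↥(zpowers x₁) := aux_isCyclic_zpowers x₁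
    exact aux_isCyclic_of_injective ψ hψinj
  haveI : IsCyclic G := aux_isCyclic_of_injective f hfinj
  exact aux_infinite_cyclic_iso G
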